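/- Define c : ℝ → ℝ by c(α) = (2α/(1−α)) · ( (2α−1)^{(2α−1)/(2−2α)} − (2α−1)^{1/(2−2α)} ) for α ≠ 1, using real powers. Then: (i) c(α) → 2 as α → 1/2 from the right; (ii) c(α) → 4/e as α → 1 within the punctured neighborhood {α > 1/2, α ≠ 1}; (iii) c(α) → 2 as α → +∞. -/

import Mathlib

open Filter

private lemma sie_keyA (c : ℝ → ℝ)
    (hc : ∀ α : ℝ, α ≠ 1 →
      c α = (2*α/(1 - α)) *
        ((2*α - 1) ^ ((2*α - 1)/(2 - 2*α)) - (2*α - 1) ^ (1/(2 - 2*α))))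
    (α : ℝ) (hα : 1/2 < α) (hα1 : α ≠ 1) :
    c α = 4*α * Real.exp (Real.log (2*α-1) * ((2*α-1)/(2-2*α))) := by
  have ht : (0:ℝ) < 2*α - 1 := by linarith
  have h1α : (1:ℝ) - α ≠ 0 := fun h => hα1 (by linarith)
  have hexp : (1:ℝ)/(2-2*α) = (2*α-1)/(2-2*α) + 1 := by
    have h2 : (2:ℝ) - 2*α ≠ 0 := fun h => hα1 (by linarith)
    field_simp
    norm_num
    ring
  rw [hc α hα1, hexp, Real.rpow_add_one ht.ne', Real.rpow_def_of_pos ht]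
  field_simp
  ring

private lemma sie_keyB (c : ℝ → ℝ)
    (hc : ∀ α : ℝ, α ≠ 1 →
      c α = (2*α/(1 - α)) *
        ((2*α - 1) ^ ((2*α - 1)/(2 - 2*α)) - (2*α - 1) ^ (1/(2 - 2*α))))
    (α : ℝ) (hα : 1/2 < α) (hα1 : α ≠ 1) :
    c α = (4*α/(2*α-1)) * Real.exp (Real.log (2*α-1) * (1/(2-2*α))) := by
  have ht : (0:ℝ) < 2*α - 1 := by linarith
  have h2 : (2:ℝ) - 2*α ≠ 0 := fun h => hα1 (by linarith)
  have harg : Real.log (2*α-1) * ((2*α-1)/(2-2*α))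
      = Real.log (2*α-1) * (1/(2-2*α)) - Real.log (2*α-1) := by
    field_simp
    ring
  rw [sie_keyA c hc α hα hα1, harg, Real.exp_sub, Real.exp_log ht]
  ring

/-- **Limiting values of the Spectral-SIE constant `c_α`.** With
`c(α) = (2α/(1−α))·((2α−1)^{(2α−1)/(2−2α)} − (2α−1)^{1/(2−2α)})` (real powers), one has
`c(α) → 2` as `α → 1/2⁺`, `c(α) → 4/e` as `α → 1` within `{α > 1/2, α ≠ 1}`, and
`c(α) → 2` as `α → +∞`. -/
theorem stmt_5 (c : ℝ → ℝ)
    (hc : ∀ α : ℝ, α ≠ 1 →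
      c α = (2*α/(1 - α)) *
        ((2*α - 1) ^ ((2*α - 1)/(2 - 2*α)) - (2*α - 1) ^ (1/(2 - 2*α)))) :
    Tendsto c (nhdsWithin (1/2) (Set.Ioi (1/2))) (nhds 2) ∧
    Tendsto c (nhdsWithin 1 (Set.Ioi (1/2) \ {1})) (nhds (4 / Real.exp 1)) ∧
    Tendsto c atTop (nhds 2) := by
  refine ⟨?_, ?_, ?_⟩
  · -- α → 1/2⁺
    have hu : Tendsto (fun α : ℝ => 2*α-1) (nhdsWithin (1/2) (Set.Ioi (1/2)))
        (nhdsWithin 0 (Set.Ioi 0)) := by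
      apply tendsto_nhdsWithin_of_tendsto_nhds_of_eventually_within
      · have h : Tendsto (fun α : ℝ => 2*α-1) (nhds (1/2)) (nhds (2*(1/2)-1)) :=
          ((continuous_const.mul continuous_id).sub continuous_const).tendsto _
        norm_num at h
        exact h.mono_left nhdsWithin_le_nhds
      · filter_upwards [self_mem_nhdsWithin] with α hα
        simp only [Set.mem_Ioi] at hα ⊢
        linarith
    have hlog : Tendsto (fun α : ℝ => Real.log (2*α-1) * (2*α-1))
        (nhdsWithin (1/2) (Set.Ioi (1/2))) (nhds 0) := by
      have h := tendsto_log_mul_rpow_nhdsGT_zero (r := 1) zero_lt_one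
      simp only [Real.rpow_one] at h
      exact h.comp hu
    have hinv : Tendsto (fun α : ℝ => (2-2*α)⁻¹)
        (nhdsWithin (1/2) (Set.Ioi (1/2))) (nhds 1) := by
      have h : Tendsto (fun α : ℝ => 2-2*α) (nhds (1/2)) (nhds (2-2*(1/2:ℝ))) :=
        (continuous_const.sub (continuous_const.mul continuous_id)).tendsto _
      have h2 := h.inv₀ (by norm_num)
      norm_num at h2
      exact h2.mono_left nhdsWithin_le_nhds
    have hE : Tendsto (fun α : ℝ => Real.log (2*α-1) * ((2*α-1)/(2-2*α)))
        (nhdsWithin (1/2) (Set.Ioi (1/2))) (nhds 0) := by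
      have h := hlog.mul hinv
      norm_num at h
      exact h.congr fun α => by rw [div_eq_mul_inv, mul_assoc]
    have h4 : Tendsto (fun α : ℝ => 4*α) (nhdsWithin (1/2) (Set.Ioi (1/2))) (nhds 2) := by
      have h : Tendsto (fun α : ℝ => 4*α) (nhds (1/2 : ℝ)) (nhds (4*(1/2:ℝ))) :=
        (continuous_const.mul continuous_id).tendsto _
      norm_num at h
      exact h.mono_left nhdsWithin_le_nhds
    have hmain := h4.mul ((Real.continuous_exp.tendsto 0).comp hE)
    norm_num at hmain
    refine hmain.congr' ?_
    filter_upwards [self_mem_nhdsWithin,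
      (eventually_lt_nhds (by norm_num : (1:ℝ)/2 < 1)).filter_mono nhdsWithin_le_nhds]
      with α hα hα1
    exact (sie_keyA c hc α hα (ne_of_lt hα1)).symm
  · -- α → 1
    have hu : Tendsto (fun α : ℝ => 2*α-1) (nhdsWithin 1 (Set.Ioi (1/2) \ {1}))
        (nhdsWithin 1 {(1:ℝ)}ᶜ) := by
      apply tendsto_nhdsWithin_of_tendsto_nhds_of_eventually_within
      · have h : Tendsto (fun α : ℝ => 2*α-1) (nhds 1) (nhds (2*1-1)) :=
          ((continuous_const.mul continuous_id).sub continuous_const).tendsto _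
        norm_num at h
        exact h.mono_left nhdsWithin_le_nhds
      · filter_upwards [self_mem_nhdsWithin] with α hα
        simp only [Set.mem_compl_iff, Set.mem_singleton_iff]
        intro h
        exact hα.2 (by simp only [Set.mem_singleton_iff]; linarith)
    have hslope : Tendsto (slope Real.log 1) (nhdsWithin 1 {(1:ℝ)}ᶜ) (nhds 1) := by
      have h := hasDerivAt_iff_tendsto_slope.mp (Real.hasDerivAt_log one_ne_zero)
      norm_num at h
      exact h
    have hneg : Tendsto (fun t : ℝ => -t) (nhdsWithin 1 {(1:ℝ)}ᶜ) (nhds (-1)) :=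
      (continuous_neg.tendsto 1).mono_left nhdsWithin_le_nhds
    have hcomp : Tendsto (fun t : ℝ => -t * slope Real.log 1 t)
        (nhdsWithin 1 {(1:ℝ)}ᶜ) (nhds (-1)) := by
      have h := hneg.mul hslope
      norm_num at h
      exact h.neg.congr fun t => by ring
    have hE : Tendsto (fun α : ℝ => Real.log (2*α-1) * ((2*α-1)/(2-2*α)))
        (nhdsWithin 1 (Set.Ioi (1/2) \ {1})) (nhds (-1)) := by
      refine (hcomp.comp hu).congr' ?_
      filter_upwards [self_mem_nhdsWithin] with α hα
      have hα1 : α ≠ 1 := fun h => hα.2 (by simp [h])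
      have h1 : (2*α-1) - 1 ≠ 0 := fun h => hα1 (by linarith)
      have h2 : (2:ℝ) - 2*α ≠ 0 := fun h => hα1 (by linarith)
      simp only [Function.comp_apply, slope_def_field, Real.log_one, sub_zero]
      field_simp
      ring
    have h4 : Tendsto (fun α : ℝ => 4*α) (nhdsWithin 1 (Set.Ioi (1/2) \ {1})) (nhds 4) := by
      have h : Tendsto (fun α : ℝ => 4*α) (nhds (1:ℝ)) (nhds (4*(1:ℝ))) :=
        (continuous_const.mul continuous_id).tendsto _
      norm_num at h
      exact h.mono_left nhdsWithin_le_nhds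
    have hmain := h4.mul ((Real.continuous_exp.tendsto (-1)).comp hE)
    have hval : (4:ℝ) * Real.exp (-1) = 4 / Real.exp 1 := by
      rw [Real.exp_neg, div_eq_mul_inv]
    rw [hval] at hmain
    refine hmain.congr' ?_
    filter_upwards [self_mem_nhdsWithin] with α hα
    have hα1 : α ≠ 1 := fun h => hα.2 (by simp [h])
    exact (sie_keyA c hc α hα.1 hα1).symm
  · -- α → ∞
    have ht : Tendsto (fun α : ℝ => 2*α-1) atTop atTop := by
      have h : Tendsto (fun α : ℝ => 2*α) atTop atTop :=
        tendsto_id.const_mul_atTop two_pos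
      exact (tendsto_atTop_add_const_right atTop (-1) h).congr (fun α => by ring)
    have ht2 : Tendsto (fun α : ℝ => 2*α-2) atTop atTop := by
      have h : Tendsto (fun α : ℝ => 2*α) atTop atTop :=
        tendsto_id.const_mul_atTop two_pos
      exact (tendsto_atTop_add_const_right atTop (-2) h).congr (fun α => by ring)
    have hfrac : Tendsto (fun α : ℝ => 4*α/(2*α-1)) atTop (nhds 2) := by
      have h := (tendsto_const_nhds (x := (2:ℝ)) (f := atTop)).add
        ((tendsto_const_nhds (x := (2:ℝ)) (f := atTop)).div_atTop ht)
      norm_num at h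
      refine h.congr' ?_
      filter_upwards [eventually_gt_atTop (1:ℝ)] with α hα
      have h0 : (2:ℝ)*α-1 ≠ 0 := by intro h; linarith
      field_simp
      ring
    have h2 : Tendsto (fun α : ℝ => (2*α-1)/(2-2*α)) atTop (nhds (-1)) := by
      have h := (tendsto_const_nhds (x := (-1:ℝ)) (f := atTop)).sub
        ((tendsto_const_nhds (x := (1:ℝ)) (f := atTop)).div_atTop ht2)
      norm_num at h
      refine h.congr' ?_
      filter_upwards [eventually_gt_atTop (1:ℝ)] with α hα
      have h0 : (2:ℝ)*α-2 ≠ 0 := by intro h; linarith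
      have h1 : (2:ℝ)-2*α ≠ 0 := by intro h; linarith
      have h3 : (1:ℝ)-α ≠ 0 := by intro h; linarith
      field_simp
      ring
    have hlogdiv : Tendsto (fun t : ℝ => Real.log t / t) atTop (nhds 0) :=
      Real.isLittleO_log_id_atTop.tendsto_div_nhds_zero
    have hE : Tendsto (fun α : ℝ => Real.log (2*α-1) * (1/(2-2*α))) atTop (nhds 0) := by
      have hc1 := hlogdiv.comp ht
      have h := hc1.mul h2
      norm_num at h
      refine h.congr' ?_
      filter_upwards [eventually_gt_atTop (1:ℝ)] with α hα
      have h0 : (2:ℝ)*α-1 ≠ 0 := by intro h; linarith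
      have h1 : (2:ℝ)-2*α ≠ 0 := by intro h; linarith
      show Real.log (2*α-1)/(2*α-1) * ((2*α-1)/(2-2*α)) = _
      field_simp
    have hmain := hfrac.mul ((Real.continuous_exp.tendsto 0).comp hE)
    norm_num at hmain
    refine hmain.congr' ?_
    filter_upwards [eventually_gt_atTop (1:ℝ)] with α hα
    have h := (sie_keyB c hc α (by linarith) (ne_of_gt hα)).symm
    simpa [one_div] using h
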